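/- Let β ∈ (0,1) be a real number, let ℓ, s be positive integers, let Y be a finite set, and let F₁, F₂, …, F_{s+1} be families of ℓ-element subsets of Y that are nested and cross-dependent. Suppose there is an integer t with |Y| ≥ t·ℓ and t ≥ β(2s+1). Then |F₁| + |F₂| + … + |F_s| + (s+1)·|F_{s+1}| ≤ (s/β)·C(|Y|, ℓ). -/

import Mathlib

open Finset

/-- Greedy SDR for nested set systems. -/
lemma exists_sdr {α : Type*} [DecidableEq α] [Nonempty α] :
    ∀ (m : ℕ) (S : ℕ → Finset α), (∀ i j, i ≤ j → S j ⊆ S i) →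
    (∀ k, k < m → m - k ≤ (S k).card) →
    ∃ g : ℕ → α, (∀ k, k < m → g k ∈ S k) ∧
      (∀ k l, k < m → l < m → k ≠ l → g k ≠ g l) := by
  intro m
  induction m with
  | zero =>
    intro S _ _
    exact ⟨fun _ => Classical.arbitrary α, by omega, by omega⟩
  | succ m ih =>
    intro S hmono hcard
    have h1 : 1 ≤ (S m).card := by
      have := hcard m (Nat.lt_succ_self m); omega
    obtain ⟨x, hx⟩ := Finset.card_pos.mp h1
    obtain ⟨g', hg'mem, hg'inj⟩ := ih (fun k => (S k).erase x)
      (fun i j hij => Finset.erase_subset_erase x (hmono i j hij))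
      (fun k hk => by
        show m - k ≤ ((S k).erase x).card
        have h2 := hcard k (Nat.lt_succ_of_lt hk)
        have h3 : (S k).card - 1 ≤ ((S k).erase x).card := Finset.pred_card_le_card_erase
        omega)
    refine ⟨fun k => if k = m then x else g' k, ?_, ?_⟩
    · intro k hk
      rcases Nat.lt_succ_iff_lt_or_eq.mp hk with h | h
      · simp only [Nat.ne_of_lt h, if_neg]
        exact Finset.mem_of_mem_erase (hg'mem k h)
      · simp [h, hx]
    · intro k l hk hl hkl
      rcases Nat.lt_succ_iff_lt_or_eq.mp hk with h | h <;>
        rcases Nat.lt_succ_iff_lt_or_eq.mp hl with h' | h'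
      · simpa [Nat.ne_of_lt h, Nat.ne_of_lt h'] using hg'inj k l h h' hkl
      · simp only [Nat.ne_of_lt h, if_neg, h', if_pos]
        exact Finset.ne_of_mem_erase (hg'mem k h)
      · simp only [Nat.ne_of_lt h', if_neg, h, if_pos]
        exact (Finset.ne_of_mem_erase (hg'mem l h')).symm
      · omega

section Blocks

variable {Y : Finset ℕ} {u ℓ : ℕ}

/-- The `j`-th block of an embedding, as a finset of naturals. -/
def blockSet (φ : (Fin u × Fin ℓ) ↪ {x // x ∈ Y}) (j : Fin u) : Finset ℕ :=
  Finset.image (fun b : Fin ℓ => ((φ (j, b)) : ℕ)) Finset.univ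

lemma card_blockSet (φ : (Fin u × Fin ℓ) ↪ {x // x ∈ Y}) (j : Fin u) :
    (blockSet φ j).card = ℓ := by
  rw [blockSet, Finset.card_image_of_injective _ (fun a b hab => by
    have : φ (j, a) = φ (j, b) := Subtype.ext hab
    exact (Prod.mk.injEq _ _ _ _ ▸ φ.injective this).2), Finset.card_univ, Fintype.card_fin]

lemma blockSet_mem_powersetCard (φ : (Fin u × Fin ℓ) ↪ {x // x ∈ Y}) (j : Fin u) :
    blockSet φ j ∈ Y.powersetCard ℓ := by
  rw [Finset.mem_powersetCard]
  refine ⟨fun x hx => ?_, card_blockSet φ j⟩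
  simp only [blockSet, Finset.mem_image] at hx
  obtain ⟨b, _, rfl⟩ := hx
  exact (φ (j, b)).2

lemma blockSet_disjoint (φ : (Fin u × Fin ℓ) ↪ {x // x ∈ Y}) {j j' : Fin u} (h : j ≠ j') :
    Disjoint (blockSet φ j) (blockSet φ j') := by
  rw [Finset.disjoint_left]
  intro a ha ha'
  simp only [blockSet, Finset.mem_image] at ha ha'
  obtain ⟨b, _, hb⟩ := ha
  obtain ⟨b', _, hb'⟩ := ha'
  have : φ (j, b) = φ (j', b') := Subtype.ext (hb.trans hb'.symm)
  exact h (congrArg Prod.fst (φ.injective this))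

end Blocks

lemma subtypeCongr_prop {α : Type*} {p q : α → Prop} [DecidablePred p] [DecidablePred q]
    (e : { x // p x } ≃ { x // q x }) (f : { x // ¬p x } ≃ { x // ¬q x }) (a : α) :
    q (Equiv.subtypeCongr e f a) ↔ p a := by
  by_cases h : p a
  · have : Equiv.subtypeCongr e f a = (e ⟨a, h⟩ : α) := by
      simp [Equiv.subtypeCongr, h]
    rw [this]
    exact iff_of_true (e ⟨a, h⟩).2 h
  · have : Equiv.subtypeCongr e f a = (f ⟨a, h⟩ : α) := by
      simp [Equiv.subtypeCongr, h]
    rw [this]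
    exact iff_of_false (f ⟨a, h⟩).2 h

/-- A permutation of (the coercion of) `Y` carrying `A` exactly onto `A'`. -/
lemma exists_perm_map {Y A A' : Finset ℕ} {ℓ : ℕ}
    (hA : A ∈ Y.powersetCard ℓ) (hA' : A' ∈ Y.powersetCard ℓ) :
    ∃ σ : Equiv.Perm {x // x ∈ Y}, ∀ v : {x // x ∈ Y}, ((σ v : ℕ) ∈ A' ↔ (v : ℕ) ∈ A) := by
  classical
  rw [Finset.mem_powersetCard] at hA hA'
  obtain ⟨hAY, hAc⟩ := hA
  obtain ⟨hA'Y, hA'c⟩ := hA'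
  have cardA : Fintype.card {v : {x // x ∈ Y} // (v : ℕ) ∈ A} = ℓ := by
    rw [Fintype.card_congr
      (⟨fun v => (⟨v.1.1, v.2⟩ : {x // x ∈ A}), fun x => ⟨⟨x.1, hAY x.2⟩, x.2⟩,
        fun v => rfl, fun x => rfl⟩ :
        {v : {x // x ∈ Y} // (v : ℕ) ∈ A} ≃ {x // x ∈ A})]
    rw [Fintype.card_coe]; exact hAc
  have cardA' : Fintype.card {v : {x // x ∈ Y} // (v : ℕ) ∈ A'} = ℓ := by
    rw [Fintype.card_congr
      (⟨fun v => (⟨v.1.1, v.2⟩ : {x // x ∈ A'}), fun x => ⟨⟨x.1, hA'Y x.2⟩, x.2⟩,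
        fun v => rfl, fun x => rfl⟩ :
        {v : {x // x ∈ Y} // (v : ℕ) ∈ A'} ≃ {x // x ∈ A'})]
    rw [Fintype.card_coe]; exact hA'c
  have e₁ : {v : {x // x ∈ Y} // (v : ℕ) ∈ A} ≃ {v : {x // x ∈ Y} // (v : ℕ) ∈ A'} :=
    Fintype.equivOfCardEq (by rw [cardA, cardA'])
  have e₂ : {v : {x // x ∈ Y} // ¬((v : ℕ) ∈ A)} ≃ {v : {x // x ∈ Y} // ¬((v : ℕ) ∈ A')} :=
    Fintype.equivOfCardEq (by
      rw [Fintype.card_subtype_compl, Fintype.card_subtype_compl, cardA, cardA'])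
  exact ⟨Equiv.subtypeCongr e₁ e₂, fun v => subtypeCongr_prop e₁ e₂ v⟩

section Blocks
variable {Y : Finset ℕ} {u ℓ : ℕ}

lemma fiber_card_eq {A A' : Finset ℕ} (j : Fin u)
    (hA : A ∈ Y.powersetCard ℓ) (hA' : A' ∈ Y.powersetCard ℓ)
    (σ : Equiv.Perm {x // x ∈ Y}) (hσ : ∀ v : {x // x ∈ Y}, ((σ v : ℕ) ∈ A' ↔ (v : ℕ) ∈ A)) :
    (Finset.univ.filter fun φ : (Fin u × Fin ℓ) ↪ {x // x ∈ Y} => blockSet φ j = A).card =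
    (Finset.univ.filter fun φ : (Fin u × Fin ℓ) ↪ {x // x ∈ Y} => blockSet φ j = A').card := by
  classical
  have hA'c : A'.card = ℓ := (Finset.mem_powersetCard.mp hA').2
  have hAc : A.card = ℓ := (Finset.mem_powersetCard.mp hA).2
  have hσ' : ∀ w : {x // x ∈ Y}, ((σ.symm w : ℕ) ∈ A ↔ (w : ℕ) ∈ A') := by
    intro w
    have := hσ (σ.symm w)
    rw [Equiv.apply_symm_apply] at this
    exact this.symm
  refine Finset.card_bij' (fun φ _ => φ.trans σ.toEmbedding)
    (fun φ _ => φ.trans σ.symm.toEmbedding) ?_ ?_ ?_ ?_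
  · intro φ hφ
    rw [Finset.mem_filter] at hφ ⊢
    refine ⟨Finset.mem_univ _, ?_⟩
    apply Finset.eq_of_subset_of_card_le
    · intro x hx
      simp only [blockSet, Finset.mem_image] at hx
      obtain ⟨b, _, rfl⟩ := hx
      refine (hσ (φ (j, b))).mpr ?_
      rw [← hφ.2]
      exact Finset.mem_image_of_mem _ (Finset.mem_univ b)
    · rw [hA'c, card_blockSet]
  · intro φ hφ
    rw [Finset.mem_filter] at hφ ⊢
    refine ⟨Finset.mem_univ _, ?_⟩
    apply Finset.eq_of_subset_of_card_le
    · intro x hx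
      simp only [blockSet, Finset.mem_image] at hx
      obtain ⟨b, _, rfl⟩ := hx
      refine (hσ' (φ (j, b))).mpr ?_
      rw [← hφ.2]
      exact Finset.mem_image_of_mem _ (Finset.mem_univ b)
    · rw [hAc, card_blockSet]
  · intro φ _
    apply DFunLike.ext
    intro x
    simp
  · intro φ _
    apply DFunLike.ext
    intro x
    simp

end Blocks

lemma per_phi {Y : Finset ℕ} {ℓ s u : ℕ} (F : Fin (s + 1) → Finset (Finset ℕ))
    (hnested : ∀ i j : Fin (s + 1), i ≤ j → F j ⊆ F i)
    (hcross : ¬ ∃ f : Fin (s + 1) → Finset ℕ, (∀ i, f i ∈ F i) ∧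
        ∀ i j, i ≠ j → Disjoint (f i) (f j))
    (hu0 : 0 < u) (hu2 : u ≤ 2 * s + 1)
    (φ : (Fin u × Fin ℓ) ↪ {x // x ∈ Y}) :
    (∑ i : Fin s,
        (Finset.univ.filter fun j : Fin u => blockSet φ j ∈ F i.castSucc).card)
      + (s + 1) * (Finset.univ.filter fun j : Fin u => blockSet φ j ∈ F (Fin.last s)).card
      ≤ s * (2 * s + 1) := by
  classical
  set P : Fin (s + 1) → Finset (Fin u) :=
    (fun k => Finset.univ.filter fun j => blockSet φ j ∈ F k) with hP
  have hmonoP : ∀ k k' : Fin (s + 1), k ≤ k' → P k' ⊆ P k := by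
    intro k k' hkk' j hj
    rw [hP, Finset.mem_filter] at hj ⊢
    exact ⟨hj.1, hnested k k' hkk' hj.2⟩
  have hblock : ∃ k : Fin (s + 1), (P k).card + k.val ≤ s := by
    by_contra hcon
    push_neg at hcon
    haveI : Nonempty (Fin u) := ⟨⟨0, hu0⟩⟩
    obtain ⟨g, hg, hginj⟩ := exists_sdr (s + 1)
      (fun k => if h : k < s + 1 then P ⟨k, h⟩ else ∅)
      (by
        intro i j hij
        by_cases hj : j < s + 1
        · have hi : i < s + 1 := lt_of_le_of_lt hij hj
          rw [dif_pos hi, dif_pos hj]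
          exact hmonoP ⟨i, hi⟩ ⟨j, hj⟩ hij
        · rw [dif_neg hj]
          exact Finset.empty_subset _)
      (by
        intro k hk
        rw [dif_pos hk]
        have := hcon ⟨k, hk⟩
        simp only at this
        omega)
    apply hcross
    refine ⟨fun i => blockSet φ (g i.val), ?_, ?_⟩
    · intro i
      have h := hg i.val i.isLt
      rw [dif_pos i.isLt] at h
      exact (Finset.mem_filter.mp h).2
    · intro i j hij
      exact blockSet_disjoint φ (hginj i.val j.val i.isLt j.isLt (fun h => hij (Fin.ext h)))
  obtain ⟨k₀, hk₀⟩ := hblock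
  have hcard_le_u : ∀ k, (P k).card ≤ u := by
    intro k
    calc (P k).card ≤ (Finset.univ : Finset (Fin u)).card := Finset.card_filter_le _ _
    _ = u := by simp
  have hlast : (P (Fin.last s)).card ≤ (P k₀).card :=
    Finset.card_le_card (hmonoP k₀ (Fin.last s) (Fin.le_last k₀))
  set c := (P k₀).card with hc
  set p := (Finset.univ.filter fun i : Fin s => i.val < k₀.val).card with hpdef
  set q := (Finset.univ.filter fun i : Fin s => ¬ i.val < k₀.val).card with hqdef
  have hpq : p + q = s := by
    rw [hpdef, hqdef, Finset.card_filter_add_card_filter_not]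
    simp
  have hpk : p ≤ k₀.val := by
    rw [hpdef]
    calc (Finset.univ.filter fun i : Fin s => i.val < k₀.val).card
        ≤ (Finset.range k₀.val).card := by
          apply Finset.card_le_card_of_injOn (fun i : Fin s => i.val)
          · intro i hi
            rw [Finset.mem_coe, Finset.mem_range]
            exact (Finset.mem_filter.mp hi).2
          · intro a _ b _ h
            exact Fin.ext h
    _ = k₀.val := Finset.card_range _
  have hsum : (∑ i : Fin s, (P i.castSucc).card) ≤ p * u + q * c := by
    rw [← Finset.sum_filter_add_sum_filter_not Finset.univ (fun i : Fin s => i.val < k₀.val)]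
    gcongr ?_ + ?_
    · calc ∑ i ∈ Finset.univ.filter fun i : Fin s => i.val < k₀.val, (P i.castSucc).card
          ≤ (Finset.univ.filter fun i : Fin s => i.val < k₀.val).card • u :=
            Finset.sum_le_card_nsmul _ _ _ (fun i _ => hcard_le_u _)
      _ = p * u := by rw [hpdef, smul_eq_mul]
    · calc ∑ i ∈ Finset.univ.filter fun i : Fin s => ¬ i.val < k₀.val, (P i.castSucc).card
          ≤ (Finset.univ.filter fun i : Fin s => ¬ i.val < k₀.val).card • c := by
            apply Finset.sum_le_card_nsmul
            intro i hi
            have hik : ¬ i.val < k₀.val := (Finset.mem_filter.mp hi).2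
            apply Finset.card_le_card
            apply hmonoP
            rw [Fin.le_def]
            simp only [Fin.coe_castSucc]
            omega
      _ = q * c := by rw [hqdef, smul_eq_mul]
  have hks : k₀.val ≤ s := Nat.lt_succ_iff.mp k₀.isLt
  have hcu : c ≤ u := hcard_le_u k₀
  -- final arithmetic over ℤ
  have goal' : p * u + q * c + (s + 1) * (P (Fin.last s)).card ≤ s * (2 * s + 1) := by
    have h4 : (s + 1) * (P (Fin.last s)).card ≤ (s + 1) * c :=
      Nat.mul_le_mul_left _ hlast
    zify at hpq hpk hk₀ hcu hks hu2 h4 ⊢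
    have h1 : ((k₀.val : ℤ) - p) * ((u : ℤ) - c) ≥ 0 := by
      apply mul_nonneg <;> omega
    have h2 : ((2 * s + 1 : ℤ) - k₀.val) * ((s : ℤ) - k₀.val - c) ≥ 0 := by
      apply mul_nonneg <;> omega
    have h3 : ((k₀.val : ℤ)) * ((3 * s + 1 : ℤ) - k₀.val - u) ≥ 0 := by
      apply mul_nonneg <;> omega
    have hqc : (q : ℤ) * c = (s : ℤ) * c - (p : ℤ) * c := by
      have : (q : ℤ) = s - p := by omega
      rw [this]; ring
    nlinarith [h1, h2, h3, hqc, h4]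
  calc (∑ i : Fin s, (P i.castSucc).card) + (s + 1) * (P (Fin.last s)).card
      ≤ p * u + q * c + (s + 1) * (P (Fin.last s)).card := by omega
  _ ≤ s * (2 * s + 1) := goal'

lemma count_key {Y : Finset ℕ} {u ℓ : ℕ} (hℓn : ℓ ≤ Y.card) (j : Fin u)
    (G : Finset (Finset ℕ)) (hG : G ⊆ Y.powersetCard ℓ) :
    Y.card.choose ℓ *
      (Finset.univ.filter
        fun φ : (Fin u × Fin ℓ) ↪ {x // x ∈ Y} => blockSet φ j ∈ G).card
    = G.card * Fintype.card ((Fin u × Fin ℓ) ↪ {x // x ∈ Y}) := by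
  classical
  obtain ⟨A₀, hA₀⟩ := Finset.powersetCard_nonempty.mpr hℓn
  set D := (Finset.univ.filter
    fun φ : (Fin u × Fin ℓ) ↪ {x // x ∈ Y} => blockSet φ j = A₀).card with hD
  have hfib : ∀ A ∈ Y.powersetCard ℓ,
      (Finset.univ.filter
        fun φ : (Fin u × Fin ℓ) ↪ {x // x ∈ Y} => blockSet φ j = A).card = D := by
    intro A hA
    obtain ⟨σ, hσ⟩ := exists_perm_map hA hA₀
    exact fiber_card_eq j hA hA₀ σ hσ
  have hcount : ∀ H : Finset (Finset ℕ), H ⊆ Y.powersetCard ℓ →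
      (Finset.univ.filter
        fun φ : (Fin u × Fin ℓ) ↪ {x // x ∈ Y} => blockSet φ j ∈ H).card = H.card * D := by
    intro H hH
    rw [Finset.card_eq_sum_card_fiberwise
      (f := fun φ : (Fin u × Fin ℓ) ↪ {x // x ∈ Y} => blockSet φ j) (t := H)
      (s := Finset.univ.filter fun φ => blockSet φ j ∈ H)
      (fun φ hφ => (Finset.mem_filter.mp hφ).2)]
    rw [Finset.sum_congr rfl (fun A hA => ?_), Finset.sum_const, smul_eq_mul]
    have heq : (Finset.filter (fun φ : (Fin u × Fin ℓ) ↪ {x // x ∈ Y} => blockSet φ j = A)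
        (Finset.filter (fun φ => blockSet φ j ∈ H) Finset.univ))
        = Finset.filter (fun φ => blockSet φ j = A) Finset.univ := by
      ext φ
      simp only [Finset.mem_filter, Finset.mem_univ, true_and]
      constructor
      · exact fun h => h.2
      · intro h
        exact ⟨h ▸ hA, h⟩
    rw [heq, hfib A (hH hA)]
  have hΩ : Fintype.card ((Fin u × Fin ℓ) ↪ {x // x ∈ Y}) = Y.card.choose ℓ * D := by
    rw [← Finset.card_univ]
    have huniv : (Finset.univ : Finset ((Fin u × Fin ℓ) ↪ {x // x ∈ Y}))
        = Finset.univ.filter (fun φ => blockSet φ j ∈ Y.powersetCard ℓ) := by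
      symm
      apply Finset.filter_true_of_mem
      intro φ _
      exact blockSet_mem_powersetCard φ j
    rw [huniv, hcount _ (subset_refl _), Finset.card_powersetCard]
  rw [hcount G hG, hΩ]
  ring

set_option maxHeartbeats 1000000

/-- Theorem 2.2 (Frankl): if `F₁ ⊇ F₂ ⊇ … ⊇ F_{s+1}` are nested, cross-dependent families of
`ℓ`-subsets of a finite set `Y`, and `t` is an integer with `|Y| ≥ tℓ` and `t ≥ β(2s+1)` for
some `β ∈ (0,1)`, then `|F₁| + … + |F_s| + (s+1)|F_{s+1}| ≤ (s/β)·C(|Y|,ℓ)`. -/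
theorem stmt_5 (β : ℝ) (hβ0 : 0 < β) (hβ1 : β < 1) (ℓ s : ℕ) (hℓ : 0 < ℓ) (hs : 0 < s)
    (Y : Finset ℕ) (F : Fin (s + 1) → Finset (Finset ℕ))
    (hsub : ∀ i, F i ⊆ Y.powersetCard ℓ)
    (hnested : ∀ i j : Fin (s + 1), i ≤ j → F j ⊆ F i)
    (hcross : ¬ ∃ f : Fin (s + 1) → Finset ℕ, (∀ i, f i ∈ F i) ∧
        ∀ i j, i ≠ j → Disjoint (f i) (f j))
    (t : ℕ) (hY : t * ℓ ≤ Y.card) (ht : β * (2 * s + 1) ≤ (t : ℝ)) :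
    (∑ i : Fin s, ((F i.castSucc).card : ℝ)) + ((s : ℝ) + 1) * ((F (Fin.last s)).card : ℝ) ≤
      (s / β) * (Y.card.choose ℓ : ℝ) := by
  classical
  set C := Y.card.choose ℓ with hCdef
  set Lnat : ℕ := (∑ i : Fin s, (F i.castSucc).card) + (s + 1) * (F (Fin.last s)).card
    with hLdef
  have hLHS : (∑ i : Fin s, ((F i.castSucc).card : ℝ))
      + ((s : ℝ) + 1) * ((F (Fin.last s)).card : ℝ) = (Lnat : ℝ) := by
    rw [hLdef]
    push_cast
    ring
  rw [hLHS]
  have hCnonneg : (0 : ℝ) ≤ (C : ℝ) := Nat.cast_nonneg _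
  have hFle : ∀ k, (F k).card ≤ C := fun k => by
    calc (F k).card ≤ (Y.powersetCard ℓ).card := Finset.card_le_card (hsub k)
      _ = C := by rw [Finset.card_powersetCard]
  by_cases hts : t ≤ s
  · -- trivial case
    have hL : Lnat ≤ (2 * s + 1) * C := by
      rw [hLdef]
      have h1 : (∑ i : Fin s, (F i.castSucc).card) ≤ s * C := by
        calc (∑ i : Fin s, (F i.castSucc).card)
            ≤ (Finset.univ : Finset (Fin s)).card • C :=
              Finset.sum_le_card_nsmul _ _ _ (fun i _ => hFle _)
          _ = s * C := by simp [smul_eq_mul]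
      have h2 : (s + 1) * (F (Fin.last s)).card ≤ (s + 1) * C :=
        Nat.mul_le_mul_left _ (hFle _)
      have h3 : (2 * s + 1) * C = s * C + (s + 1) * C := by ring
      omega
    have hβs : β * (2 * s + 1) ≤ (s : ℝ) := by
      have : (t : ℝ) ≤ (s : ℝ) := by exact_mod_cast hts
      linarith
    rw [div_mul_eq_mul_div, le_div_iff₀ hβ0]
    have hL' : (Lnat : ℝ) ≤ (2 * s + 1) * C := by exact_mod_cast hL
    nlinarith [hL', hβs, hβ0.le, hCnonneg]
  · -- main case
    push_neg at hts
    set u := min t (2 * s + 1) with hudef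
    have hu1 : s + 1 ≤ u := le_min (by omega) (by omega)
    have hu2 : u ≤ 2 * s + 1 := min_le_right _ _
    have hu0 : 0 < u := by omega
    have hun : u * ℓ ≤ Y.card :=
      le_trans (Nat.mul_le_mul_right ℓ (min_le_left _ _)) hY
    have hℓn : ℓ ≤ Y.card := le_trans (by nlinarith) hun
    have hΩpos : 0 < Fintype.card ((Fin u × Fin ℓ) ↪ {x // x ∈ Y}) := by
      rw [Fintype.card_embedding_eq, Fintype.card_prod, Fintype.card_fin,
        Fintype.card_fin, Fintype.card_coe]
      rcases Nat.eq_zero_or_pos (Y.card.descFactorial (u * ℓ)) with h | h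
      · rw [Nat.descFactorial_eq_zero_iff_lt] at h
        omega
      · exact h
    -- counting identity
    have key : ∀ k : Fin (s + 1),
        C * (∑ φ : (Fin u × Fin ℓ) ↪ {x // x ∈ Y},
            (Finset.univ.filter fun j : Fin u => blockSet φ j ∈ F k).card)
        = (F k).card * (u * Fintype.card ((Fin u × Fin ℓ) ↪ {x // x ∈ Y})) := by
      intro k
      have hswap : (∑ φ : (Fin u × Fin ℓ) ↪ {x // x ∈ Y},
            (Finset.univ.filter fun j : Fin u => blockSet φ j ∈ F k).card)
          = ∑ j : Fin u,
            (Finset.univ.filter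
              fun φ : (Fin u × Fin ℓ) ↪ {x // x ∈ Y} => blockSet φ j ∈ F k).card := by
        simp only [Finset.card_filter]
        rw [Finset.sum_comm]
      rw [hswap, Finset.mul_sum]
      rw [Finset.sum_congr rfl (fun j _ => count_key hℓn j (F k) (hsub k))]
      rw [Finset.sum_const, smul_eq_mul, Finset.card_univ, Fintype.card_fin]
      ring
    -- per-tuple bound summed
    have total : (∑ φ : (Fin u × Fin ℓ) ↪ {x // x ∈ Y}, ((∑ i : Fin s,
          (Finset.univ.filter fun j : Fin u => blockSet φ j ∈ F i.castSucc).card)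
        + (s + 1) * (Finset.univ.filter fun j : Fin u => blockSet φ j ∈ F (Fin.last s)).card))
        ≤ s * (2 * s + 1) * Fintype.card ((Fin u × Fin ℓ) ↪ {x // x ∈ Y}) := by
      calc (∑ φ : (Fin u × Fin ℓ) ↪ {x // x ∈ Y}, ((∑ i : Fin s,
              (Finset.univ.filter fun j : Fin u => blockSet φ j ∈ F i.castSucc).card)
            + (s + 1) * (Finset.univ.filter
                fun j : Fin u => blockSet φ j ∈ F (Fin.last s)).card))
          ≤ (Finset.univ : Finset ((Fin u × Fin ℓ) ↪ {x // x ∈ Y})).card • (s * (2 * s + 1)) :=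
            Finset.sum_le_card_nsmul _ _ _
              (fun φ _ => per_phi F hnested hcross hu0 hu2 φ)
        _ = s * (2 * s + 1) * Fintype.card ((Fin u × Fin ℓ) ↪ {x // x ∈ Y}) := by
            rw [smul_eq_mul, Finset.card_univ]; ring
    -- combine
    have hmain : Lnat * u ≤ s * (2 * s + 1) * C := by
      have hexp : C * (∑ φ : (Fin u × Fin ℓ) ↪ {x // x ∈ Y}, ((∑ i : Fin s,
            (Finset.univ.filter fun j : Fin u => blockSet φ j ∈ F i.castSucc).card)
          + (s + 1) * (Finset.univ.filter
              fun j : Fin u => blockSet φ j ∈ F (Fin.last s)).card))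
          = Lnat * (u * Fintype.card ((Fin u × Fin ℓ) ↪ {x // x ∈ Y})) := by
        rw [Finset.mul_sum]
        have hdist : ∀ φ : (Fin u × Fin ℓ) ↪ {x // x ∈ Y}, C * ((∑ i : Fin s,
              (Finset.univ.filter fun j : Fin u => blockSet φ j ∈ F i.castSucc).card)
            + (s + 1) * (Finset.univ.filter
                fun j : Fin u => blockSet φ j ∈ F (Fin.last s)).card)
            = (∑ i : Fin s, C *
              (Finset.univ.filter fun j : Fin u => blockSet φ j ∈ F i.castSucc).card)
            + (s + 1) * (C * (Finset.univ.filter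
                fun j : Fin u => blockSet φ j ∈ F (Fin.last s)).card) := by
          intro φ
          rw [Nat.mul_add, Finset.mul_sum]
          ring
        rw [Finset.sum_congr rfl (fun φ _ => hdist φ)]
        rw [Finset.sum_add_distrib, ← Finset.mul_sum]
        rw [Finset.sum_comm]
        have hsum1 : (∑ i : Fin s, ∑ φ : (Fin u × Fin ℓ) ↪ {x // x ∈ Y}, C *
            (Finset.univ.filter fun j : Fin u => blockSet φ j ∈ F i.castSucc).card)
            = ∑ i : Fin s, (F i.castSucc).card *
                (u * Fintype.card ((Fin u × Fin ℓ) ↪ {x // x ∈ Y})) := by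
          refine Finset.sum_congr rfl (fun i _ => ?_)
          rw [← Finset.mul_sum, key]
        have hsum2 : (∑ φ : (Fin u × Fin ℓ) ↪ {x // x ∈ Y}, C * (Finset.univ.filter
              fun j : Fin u => blockSet φ j ∈ F (Fin.last s)).card)
            = (F (Fin.last s)).card *
                (u * Fintype.card ((Fin u × Fin ℓ) ↪ {x // x ∈ Y})) := by
          rw [← Finset.mul_sum, key]
        rw [hsum1, hsum2, hLdef, ← Finset.sum_mul]
        ring
      have h1 : Lnat * (u * Fintype.card ((Fin u × Fin ℓ) ↪ {x // x ∈ Y}))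
          ≤ C * (s * (2 * s + 1) * Fintype.card ((Fin u × Fin ℓ) ↪ {x // x ∈ Y})) := by
        rw [← hexp]
        exact Nat.mul_le_mul_left C total
      have h2 : (Lnat * u) * Fintype.card ((Fin u × Fin ℓ) ↪ {x // x ∈ Y})
          ≤ (s * (2 * s + 1) * C) * Fintype.card ((Fin u × Fin ℓ) ↪ {x // x ∈ Y}) := by
        calc (Lnat * u) * Fintype.card ((Fin u × Fin ℓ) ↪ {x // x ∈ Y})
            = Lnat * (u * Fintype.card ((Fin u × Fin ℓ) ↪ {x // x ∈ Y})) := by ring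
          _ ≤ C * (s * (2 * s + 1) * Fintype.card ((Fin u × Fin ℓ) ↪ {x // x ∈ Y})) := h1
          _ = (s * (2 * s + 1) * C) * Fintype.card ((Fin u × Fin ℓ) ↪ {x // x ∈ Y}) := by
              ring
      exact Nat.le_of_mul_le_mul_right h2 hΩpos
    -- real arithmetic
    have hβu : β * (2 * s + 1) ≤ (u : ℝ) := by
      have hucast : (u : ℝ) = min (t : ℝ) ((2 * s + 1 : ℕ) : ℝ) := by
        rw [hudef, Nat.cast_min]
      rw [hucast]
      apply le_min ht
      push_cast
      nlinarith
    have hmain' : (Lnat : ℝ) * u ≤ (s : ℝ) * (2 * (s : ℝ) + 1) * (C : ℝ) := by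
      exact_mod_cast hmain
    have hLnn : (0 : ℝ) ≤ (Lnat : ℝ) := Nat.cast_nonneg _
    rw [div_mul_eq_mul_div, le_div_iff₀ hβ0]
    have h2s1 : (0 : ℝ) < 2 * (s : ℝ) + 1 := by positivity
    apply le_of_mul_le_mul_right _ h2s1
    calc (Lnat : ℝ) * β * (2 * (s : ℝ) + 1) = (Lnat : ℝ) * (β * (2 * (s : ℝ) + 1)) := by ring
      _ ≤ (Lnat : ℝ) * u := mul_le_mul_of_nonneg_left hβu hLnn
      _ ≤ (s : ℝ) * (2 * (s : ℝ) + 1) * (C : ℝ) := hmain'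
      _ = (s : ℝ) * (C : ℝ) * (2 * (s : ℝ) + 1) := by ring
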